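/- Let w ∈ ℝⁿ and let K, L be integers with 1 ≤ L ≤ K ≤ n. Then for every subset T ⊆ {1,…,n} with |T| = K, |∑_{j∈T} w_j| ≤ (K/L) · max over subsets U ⊆ {1,…,n} with |U| = L of |∑_{j∈U} w_j|. -/

import Mathlib

set_option autoImplicit false

open Finset

lemma count_containing {α : Type*} [DecidableEq α] (T : Finset α) (j : α) (hj : j ∈ T)
    (L : ℕ) (hL : 1 ≤ L) :
    ((T.powersetCard L).filter (fun U => j ∈ U)).card = (T.card - 1).choose (L - 1) := by
  rw [← card_erase_of_mem hj, ← card_powersetCard]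
  refine Finset.card_nbij' (fun U => U.erase j) (fun V => insert j V) ?_ ?_ ?_ ?_
  · intro U hU
    simp only [mem_coe, mem_filter, mem_powersetCard] at hU
    rw [mem_coe, mem_powersetCard]
    exact ⟨erase_subset_erase _ hU.1.1, by rw [card_erase_of_mem hU.2, hU.1.2]⟩
  · intro V hV
    rw [mem_coe, mem_powersetCard] at hV
    have hjV : j ∉ V := fun h => (notMem_erase j T) (hV.1 h)
    simp only [mem_coe, mem_filter, mem_powersetCard]
    refine ⟨⟨?_, ?_⟩, mem_insert_self _ _⟩
    · intro x hx
      rcases mem_insert.1 hx with rfl | hx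
      · exact hj
      · exact (erase_subset _ _) (hV.1 hx)
    · rw [card_insert_of_notMem hjV, hV.2]
      omega
  · intro U hU
    simp only [mem_coe, mem_filter] at hU
    exact insert_erase hU.2
  · intro V hV
    rw [mem_coe, mem_powersetCard] at hV
    have hjV : j ∉ V := fun h => (notMem_erase j T) (hV.1 h)
    exact erase_insert hjV

/-- For `w ∈ ℝⁿ`, integers `1 ≤ L ≤ K ≤ n`, and every `T ⊆ [n]` with
`|T| = K`, `|∑_{j∈T} w_j| ≤ (K/L) · max_{|U| = L} |∑_{j∈U} w_j|`. -/
theorem stmt_10 (n : ℕ) (w : Fin n → ℝ) (K L : ℕ)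
    (hL : 1 ≤ L) (hLK : L ≤ K) (hKn : K ≤ n)
    (T : Finset (Fin n)) (hT : T.card = K) :
    |∑ j ∈ T, w j| ≤
      ((K : ℝ) / L) *
        (Finset.powersetCard L (Finset.univ : Finset (Fin n))).sup'
          (Finset.powersetCard_nonempty.2 (by simpa using hLK.trans hKn))
          (fun U => |∑ j ∈ U, w j|) := by
  set M := (Finset.powersetCard L (Finset.univ : Finset (Fin n))).sup'
      (Finset.powersetCard_nonempty.2 (by simpa using hLK.trans hKn))
      (fun U => |∑ j ∈ U, w j|) with hM
  have hLn : L ≤ n := hLK.trans hKn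
  -- M bounds every L-subset sum, and M ≥ 0
  have hMle : ∀ U ∈ T.powersetCard L, |∑ j ∈ U, w j| ≤ M := by
    intro U hU
    exact Finset.le_sup' (fun U => |∑ j ∈ U, w j|) (powersetCard_mono (subset_univ T) hU)
  have hne : (T.powersetCard L).Nonempty := powersetCard_nonempty.2 (by omega)
  have hM0 : 0 ≤ M := le_trans (abs_nonneg _) (hMle _ hne.choose_spec)
  -- key double counting
  have key : ∑ U ∈ T.powersetCard L, ∑ j ∈ U, w j
      = ((K - 1).choose (L - 1) : ℝ) * ∑ j ∈ T, w j := by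
    have : ∀ U ∈ T.powersetCard L, ∑ j ∈ U, w j = ∑ j ∈ T, if j ∈ U then w j else 0 := by
      intro U hU
      rw [Finset.sum_ite_mem, Finset.inter_eq_right.2 (mem_powersetCard.1 hU).1]
    rw [Finset.sum_congr rfl this, Finset.sum_comm]
    rw [Finset.mul_sum]
    refine Finset.sum_congr rfl fun j hj => ?_
    rw [← Finset.sum_filter, Finset.sum_const, nsmul_eq_mul,
      count_containing T j hj L hL, hT]
  -- key inequality
  have hc : 1 ≤ (K - 1).choose (L - 1) := Nat.choose_pos (by omega)
  have hineq : ((K - 1).choose (L - 1) : ℝ) * |∑ j ∈ T, w j| ≤ (K.choose L : ℝ) * M := by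
    calc ((K - 1).choose (L - 1) : ℝ) * |∑ j ∈ T, w j|
        = |∑ U ∈ T.powersetCard L, ∑ j ∈ U, w j| := by
          rw [key, abs_mul, abs_of_nonneg (by positivity : (0:ℝ) ≤ ((K - 1).choose (L - 1) : ℝ))]
      _ ≤ ∑ U ∈ T.powersetCard L, |∑ j ∈ U, w j| := Finset.abs_sum_le_sum_abs _ _
      _ ≤ ∑ U ∈ T.powersetCard L, M := Finset.sum_le_sum hMle
      _ = (K.choose L : ℝ) * M := by rw [Finset.sum_const, nsmul_eq_mul, card_powersetCard, hT]
  -- choose identity: L * choose K L = K * choose (K-1) (L-1)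
  have hid : L * K.choose L = K * (K - 1).choose (L - 1) := by
    have := Nat.add_one_mul_choose_eq (K - 1) (L - 1)
    have h1 : K - 1 + 1 = K := by omega
    have h2 : L - 1 + 1 = L := by omega
    rw [h1, h2] at this
    rw [Nat.mul_comm]
    exact this.symm
  have hcpos : (0:ℝ) < ((K - 1).choose (L - 1) : ℝ) := by exact_mod_cast hc
  have hLpos : (0:ℝ) < (L : ℝ) := by exact_mod_cast hL
  have hratio : ((K.choose L : ℝ)) / ((K - 1).choose (L - 1) : ℝ) = (K : ℝ) / L := by
    have : (L : ℝ) * (K.choose L : ℝ) = (K : ℝ) * ((K - 1).choose (L - 1) : ℝ) := by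
      exact_mod_cast hid
    field_simp
    linarith [this]
  rw [← hratio]
  rw [div_mul_eq_mul_div, le_div_iff₀ hcpos]
  linarith [hineq]
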